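/- Let q ≠ 0 and r be real numbers. For every nonnegative integer n, c_n^q(r) = ∑_{k=0}^n w(n,k)/(k+1). -/

import Mathlib

/-- The falling factorial `(x)_k = x(x-1)⋯(x-k+1)`. -/
noncomputable def fallFac (x : ℝ) (k : ℕ) : ℝ := ∏ i ∈ Finset.range k, (x - i)

/-- The generalized falling factorial `(x|q)_k = x(x-q)⋯(x-(k-1)q)`. -/
noncomputable def genFallFac (q x : ℝ) (k : ℕ) : ℝ := ∏ i ∈ Finset.range k, (x - i * q)

/-- The Cauchy polynomials with a `q` parameter of the first kind:
`c_n^q(z) = ∫_0^1 (x − z | q)_n dx`. -/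
noncomputable def cauchyFirst (q z : ℝ) (n : ℕ) : ℝ := ∫ x in (0:ℝ)..1, genFallFac q (x - z) n

/-- `c_n^q(r) = ∑_{k=0}^n w(n,k)/(k+1)`. -/
theorem cauchyFirst_eq_sum_whitneyFirst (q r : ℝ) (hq : q ≠ 0)
    (w : ℕ → ℕ → ℝ)
    (hw0 : ∀ n k, n < k → w n k = 0)
    (hw : ∀ n : ℕ, ∀ x : ℝ, q ^ n * fallFac x n =
      ∑ k ∈ Finset.range (n + 1), w n k * (q * x + r) ^ k)
    (n : ℕ) :
    cauchyFirst q r n = ∑ k ∈ Finset.range (n + 1), w n k / ((k : ℝ) + 1) := by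
  have key : ∀ x : ℝ, genFallFac q (x - r) n =
      ∑ k ∈ Finset.range (n + 1), w n k * x ^ k := by
    intro x
    have h := hw n ((x - r) / q)
    have hx : q * ((x - r) / q) + r = x := by field_simp; ring
    rw [hx] at h
    rw [← h]
    unfold genFallFac fallFac
    rw [show (q:ℝ)^n = ∏ _i ∈ Finset.range n, q by simp, ← Finset.prod_mul_distrib]
    refine Finset.prod_congr rfl fun i _ => ?_
    field_simp
  unfold cauchyFirst
  simp_rw [key]
  rw [intervalIntegral.integral_finset_sum]
  · refine Finset.sum_congr rfl fun k _ => ?_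
    rw [intervalIntegral.integral_const_mul, integral_pow]
    simp [div_eq_mul_inv]
  · intro k _
    exact ((continuous_const.mul (continuous_pow k)).intervalIntegrable 0 1)
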